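/- For each $n \ge 1$ and each $k \ge n$, there exist $n+1$ closed balls of equal radius in $\mathbb{R}^k$ such that every $n$ of them have a common point, but the intersection of all $n+1$ balls is empty. -/

import Mathlib

open Finset

private lemma sum_one' (n k : ℕ) (hk : n ≤ k) (m : ℕ) (hm : m < n) (a b : ℝ) :
    ∑ x ∈ range k, (if x < n then (if x = m then a else b) else 0)
      = a + ((n:ℝ) - 1) * b := by
  rw [← Finset.sum_subset (Finset.range_subset_range.mpr hk)
    (by intro x _ hx; rw [if_neg]; simpa using hx)]
  have h : ∀ x ∈ range n, (if x < n then (if x = m then a else b) else 0)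
      = b + (if x = m then a - b else 0) := by
    intro x hx
    rw [if_pos (Finset.mem_range.mp hx)]
    split <;> ring
  rw [Finset.sum_congr rfl h, Finset.sum_add_distrib, Finset.sum_const,
    Finset.sum_ite_eq' (range n) m, if_pos (Finset.mem_range.mpr hm), card_range,
    nsmul_eq_mul]
  ring

private lemma sum_two' (n k : ℕ) (hk : n ≤ k) (m₁ m₂ : ℕ) (h1 : m₁ < n) (h2 : m₂ < n)
    (hne : m₁ ≠ m₂) (a b c : ℝ) :
    ∑ x ∈ range k, (if x < n then (if x = m₁ then a else if x = m₂ then b else c) else 0)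
      = a + b + ((n:ℝ) - 2) * c := by
  rw [← Finset.sum_subset (Finset.range_subset_range.mpr hk)
    (by intro x _ hx; rw [if_neg]; simpa using hx)]
  have h : ∀ x ∈ range n, (if x < n then (if x = m₁ then a else if x = m₂ then b else c) else 0)
      = c + (if x = m₁ then a - c else 0) + (if x = m₂ then b - c else 0) := by
    intro x hx
    rw [if_pos (Finset.mem_range.mp hx)]
    split_ifs with q1 q2 <;> first | (exact absurd (q1.symm.trans q2) hne) | ring
  rw [Finset.sum_congr rfl h]
  rw [Finset.sum_add_distrib, Finset.sum_add_distrib, Finset.sum_const,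
    Finset.sum_ite_eq' (range n) m₁, Finset.sum_ite_eq' (range n) m₂,
    if_pos (Finset.mem_range.mpr h1), if_pos (Finset.mem_range.mpr h2), card_range,
    nsmul_eq_mul]
  ring

private lemma key_ineq {E : Type*} [NormedAddCommGroup E] [InnerProductSpace ℝ E]
    (N : ℕ) (v : Fin N → E) :
    ∑ i : Fin N, ∑ j : Fin N, ‖v i - v j‖^2 ≤ 2 * N * ∑ i : Fin N, ‖v i‖^2 := by
  have expand : ∀ i j : Fin N, ‖v i - v j‖^2
      = ‖v i‖^2 + ‖v j‖^2 - 2 * inner ℝ (v i) (v j) := by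
    intro i j
    rw [@norm_sub_sq_real]
    ring
  have hsum : ∑ i : Fin N, ∑ j : Fin N, (inner ℝ (v i) (v j) : ℝ)
      = ‖∑ i : Fin N, v i‖^2 := by
    rw [← real_inner_self_eq_norm_sq, sum_inner]
    exact Finset.sum_congr rfl fun i _ => (inner_sum _ _ _).symm
  calc ∑ i : Fin N, ∑ j : Fin N, ‖v i - v j‖^2
      = ∑ i : Fin N, ∑ j : Fin N, (‖v i‖^2 + ‖v j‖^2 - 2 * inner ℝ (v i) (v j)) := by
        simp_rw [expand]
    _ = 2 * N * ∑ i : Fin N, ‖v i‖^2 - 2 * ‖∑ i : Fin N, v i‖^2 := by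
        rw [← hsum]
        simp [Finset.sum_sub_distrib, Finset.sum_add_distrib, Finset.mul_sum,
          Finset.sum_const, card_univ]
        rw [← Finset.sum_add_distrib]
        exact Finset.sum_congr rfl fun x _ => by ring
    _ ≤ 2 * N * ∑ i : Fin N, ‖v i‖^2 := by nlinarith [sq_nonneg ‖∑ i : Fin N, v i‖]

noncomputable def Cc (n : ℕ) (t : ℝ) (j : ℕ) : ℕ → ℝ := fun x =>
  if x < n then (if j = 0 then t else if x + 1 = j then 1 else 0) else 0

noncomputable def Pp (n : ℕ) (t : ℝ) (i : ℕ) : ℕ → ℝ := fun x =>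
  if x < n then (if i = 0 then 1/n else if x + 1 = i then t/n else (t+1)/n) else 0

theorem stmt_5 (n k : ℕ) (hn : 1 ≤ n) (hk : n ≤ k) :
    ∃ (c : Fin (n + 1) → EuclideanSpace ℝ (Fin k)) (r : ℝ), 0 < r ∧
      (∀ i : Fin (n + 1), ∃ p, ∀ j : Fin (n + 1), j ≠ i → p ∈ Metric.closedBall (c j) r) ∧
      ¬ ∃ p, ∀ j : Fin (n + 1), p ∈ Metric.closedBall (c j) r := by
  have hn0 : (n:ℝ) ≠ 0 := Nat.cast_ne_zero.mpr (by omega)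
  have hn1 : (1:ℝ) ≤ n := by exact_mod_cast hn
  obtain ⟨t, ht⟩ : ∃ t : ℝ, (n:ℝ) * t^2 = 2*t + 1 := by
    refine ⟨(1 + Real.sqrt (n+1)) / n, ?_⟩
    have hs : Real.sqrt ((n:ℝ)+1) ^ 2 = (n:ℝ) + 1 := Real.sq_sqrt (by positivity)
    field_simp
    nlinarith [hs]
  obtain ⟨r2, hr2pos, hfac, hmul⟩ : ∃ r2 : ℝ, 0 < r2 ∧ ((n:ℝ)-1)/n ≤ r2 ∧
      2*(n:ℝ)*((n:ℝ)+1)*r2 = 2*(n:ℝ)^2 - 1 := by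
    refine ⟨(2*(n:ℝ)^2 - 1) / (2*n*(n+1)), div_pos (by nlinarith) (by positivity), ?_, ?_⟩
    · rw [div_le_div_iff₀ (by positivity) (by positivity)]
      nlinarith
    · field_simp
  -- distance bridge
  have hdist : ∀ p q : ℕ → ℝ,
      dist (show EuclideanSpace ℝ (Fin k) from WithLp.toLp 2 (fun x : Fin k => p x.val))
           (show EuclideanSpace ℝ (Fin k) from WithLp.toLp 2 (fun x : Fin k => q x.val))
        = Real.sqrt (∑ x ∈ range k, (p x - q x)^2) := by
    intro p q
    rw [EuclideanSpace.dist_eq]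
    congr 1
    rw [← Fin.sum_univ_eq_sum_range (fun x => (p x - q x)^2) k]
    exact Finset.sum_congr rfl fun x _ => by rw [Real.dist_eq, sq_abs]
  -- pairwise center distances squared = 2
  have dcc : ∀ I J : ℕ, I ≤ n → J ≤ n → I ≠ J →
      ∑ x ∈ range k, (Cc n t I x - Cc n t J x)^2 = 2 := by
    intro I J hI hJ hIJ
    rcases Nat.eq_zero_or_pos I with hI0 | hIpos
    · obtain ⟨a, rfl⟩ : ∃ a, J = a + 1 := ⟨J - 1, by omega⟩
      have ha : a < n := by omega
      subst hI0
      have e : ∀ x, (Cc n t 0 x - Cc n t (a+1) x)^2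
          = (if x < n then (if x = a then (t-1)^2 else t^2) else 0) := by
        intro x; unfold Cc
        rcases eq_or_ne x a with rfl | hxa
        · simp [ha]
        · by_cases hx : x < n <;> simp [hx, hxa] <;> ring
      rw [Finset.sum_congr rfl fun x _ => e x, sum_one' n k hk a ha]
      linear_combination ht
    · rcases Nat.eq_zero_or_pos J with hJ0 | hJpos
      · obtain ⟨a, rfl⟩ : ∃ a, I = a + 1 := ⟨I - 1, by omega⟩
        have ha : a < n := by omega
        subst hJ0
        have e : ∀ x, (Cc n t (a+1) x - Cc n t 0 x)^2
            = (if x < n then (if x = a then (1-t)^2 else t^2) else 0) := by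
          intro x; unfold Cc
          rcases eq_or_ne x a with rfl | hxa
          · simp [ha]
          · by_cases hx : x < n <;> simp [hx, hxa] <;> ring
        rw [Finset.sum_congr rfl fun x _ => e x, sum_one' n k hk a ha]
        linear_combination ht
      · obtain ⟨a, rfl⟩ : ∃ a, I = a + 1 := ⟨I - 1, by omega⟩
        obtain ⟨b, rfl⟩ : ∃ b, J = b + 1 := ⟨J - 1, by omega⟩
        have ha : a < n := by omega
        have hb : b < n := by omega
        have hab : a ≠ b := by omega
        have e : ∀ x, (Cc n t (a+1) x - Cc n t (b+1) x)^2
            = (if x < n then (if x = a then (1:ℝ) else if x = b then 1 else 0) else 0) := by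
          intro x; unfold Cc
          rcases eq_or_ne x a with rfl | hxa
          · simp [ha, hab]
          · rcases eq_or_ne x b with rfl | hxb
            · simp [hb, hxa]
            · by_cases hx : x < n <;> simp [hx, hxa, hxb]
        rw [Finset.sum_congr rfl fun x _ => e x, sum_two' n k hk a b ha hb hab]
        ring
  -- witness-to-center distances squared ≤ r2
  have master : ∀ I J : ℕ, I ≤ n → J ≤ n → J ≠ I →
      ∑ x ∈ range k, (Pp n t I x - Cc n t J x)^2 ≤ r2 := by
    intro I J hI hJ hJI
    rcases Nat.eq_zero_or_pos I with hI0 | hIpos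
    · obtain ⟨a, rfl⟩ : ∃ a, J = a + 1 := ⟨J - 1, by omega⟩
      have ha : a < n := by omega
      subst hI0
      have e : ∀ x, (Pp n t 0 x - Cc n t (a+1) x)^2
          = (if x < n then (if x = a then (1/(n:ℝ)-1)^2 else (1/(n:ℝ))^2) else 0) := by
        intro x; unfold Pp Cc
        rcases eq_or_ne x a with rfl | hxa
        · simp [ha]
        · by_cases hx : x < n <;> simp [hx, hxa] <;> ring
      rw [Finset.sum_congr rfl fun x _ => e x, sum_one' n k hk a ha]
      have : (1/(n:ℝ)-1)^2 + ((n:ℝ) - 1) * (1/(n:ℝ))^2 = ((n:ℝ)-1)/n := by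
        field_simp; ring
      rw [this]; exact hfac
    · obtain ⟨m, rfl⟩ : ∃ m, I = m + 1 := ⟨I - 1, by omega⟩
      have hm : m < n := by omega
      rcases Nat.eq_zero_or_pos J with hJ0 | hJpos
      · subst hJ0
        have e : ∀ x, (Pp n t (m+1) x - Cc n t 0 x)^2
            = (if x < n then (if x = m then (t/(n:ℝ) - t)^2 else ((t+1)/(n:ℝ) - t)^2) else 0) := by
          intro x; unfold Pp Cc
          rcases eq_or_ne x m with rfl | hxm
          · simp [hm]
          · by_cases hx : x < n <;> simp [hx, hxm] <;> ring
        rw [Finset.sum_congr rfl fun x _ => e x, sum_one' n k hk m hm]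
        have : (t/(n:ℝ) - t)^2 + ((n:ℝ) - 1) * ((t+1)/(n:ℝ) - t)^2 = ((n:ℝ)-1)/n := by
          field_simp
          linear_combination ((n:ℝ)-1)^2 * ht
        rw [this]; exact hfac
      · obtain ⟨a, rfl⟩ : ∃ a, J = a + 1 := ⟨J - 1, by omega⟩
        have ha : a < n := by omega
        have ham : m ≠ a := by omega
        have e : ∀ x, (Pp n t (m+1) x - Cc n t (a+1) x)^2
            = (if x < n then (if x = m then (t/(n:ℝ))^2 else if x = a then ((t+1)/(n:ℝ) - 1)^2
                else ((t+1)/(n:ℝ))^2) else 0) := by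
          intro x; unfold Pp Cc
          rcases eq_or_ne x m with rfl | hxm
          · simp [hm, ham]
          · rcases eq_or_ne x a with rfl | hxa
            · simp [ha, hxm]
            · by_cases hx : x < n <;> simp [hx, hxm, hxa]
        rw [Finset.sum_congr rfl fun x _ => e x, sum_two' n k hk m a hm ha ham]
        have : (t/(n:ℝ))^2 + ((t+1)/(n:ℝ) - 1)^2 + ((n:ℝ) - 2) * ((t+1)/(n:ℝ))^2
            = ((n:ℝ)-1)/n := by
          field_simp
          linear_combination ht
        rw [this]; exact hfac
  -- assemble
  set c : Fin (n+1) → EuclideanSpace ℝ (Fin k) :=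
    fun j => WithLp.toLp 2 (fun x : Fin k => Cc n t (j:ℕ) x.val) with hc
  refine ⟨c, Real.sqrt r2, Real.sqrt_pos.mpr hr2pos, ?_, ?_⟩
  · intro i
    refine ⟨(WithLp.toLp 2 (fun x : Fin k => Pp n t (i:ℕ) x.val) : EuclideanSpace ℝ (Fin k)), ?_⟩
    intro j hji
    rw [Metric.mem_closedBall, hc, hdist]
    exact Real.sqrt_le_sqrt (master (i:ℕ) (j:ℕ) (by omega) (by omega)
      (fun h => hji (Fin.ext h)))
  · rintro ⟨p, hp⟩
    set v : Fin (n+1) → EuclideanSpace ℝ (Fin k) := fun j => p - c j with hv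
    have hvd : ∀ j, ‖v j‖ = dist p (c j) := fun j => (dist_eq_norm p (c j)).symm
    have hvn : ∀ j, ‖v j‖^2 ≤ r2 := by
      intro j
      rw [hvd]
      have h1 : dist p (c j) ≤ Real.sqrt r2 := hp j
      nlinarith [dist_nonneg (x := p) (y := c j), Real.sq_sqrt hr2pos.le,
        Real.sqrt_nonneg r2]
    have hdij : ∀ i j : Fin (n+1), ‖v i - v j‖^2 = if i = j then 0 else 2 := by
      intro i j
      have : v i - v j = c j - c i := by rw [hv]; exact sub_sub_sub_cancel_left _ _ _
      rw [this]
      by_cases hij : i = j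
      · simp [hij]
      · rw [if_neg hij, ← dist_eq_norm, hc, hdist]
        rw [Real.sq_sqrt (Finset.sum_nonneg fun x _ => sq_nonneg _)]
        exact dcc (j:ℕ) (i:ℕ) (by omega) (by omega) (fun h => hij (Fin.ext h.symm))
    have htotal : ∑ i : Fin (n+1), ∑ j : Fin (n+1), ‖v i - v j‖^2 = 2*n*(n+1) := by
      have inner_eq : ∀ i : Fin (n+1), ∑ j : Fin (n+1), ‖v i - v j‖^2 = 2*n := by
        intro i
        rw [Finset.sum_congr rfl fun j _ => hdij i j]
        have step : ∀ j ∈ (univ : Finset (Fin (n+1))),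
            (if i = j then (0:ℝ) else 2) = 2 - (if i = j then 2 else 0) := by
          intro j _; split <;> ring
        rw [Finset.sum_congr rfl step, Finset.sum_sub_distrib, Finset.sum_const,
          Finset.sum_ite_eq (univ : Finset (Fin (n+1))) i (fun _ => (2:ℝ)),
          if_pos (Finset.mem_univ i), card_univ, Fintype.card_fin, nsmul_eq_mul]
        push_cast; ring
      rw [Finset.sum_congr rfl fun i _ => inner_eq i, Finset.sum_const, card_univ,
        Fintype.card_fin, nsmul_eq_mul]
      push_cast; ring
    have hkey := key_ineq (n+1) v
    rw [htotal] at hkey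
    have hsumv : ∑ i : Fin (n+1), ‖v i‖^2 ≤ (n+1) * r2 := by
      calc ∑ i : Fin (n+1), ‖v i‖^2 ≤ ∑ _i : Fin (n+1), r2 :=
            Finset.sum_le_sum fun i _ => hvn i
        _ = (n+1) * r2 := by rw [Finset.sum_const, card_univ, Fintype.card_fin,
              nsmul_eq_mul]; push_cast; ring
    push_cast at hkey
    have h3 : 2*(n:ℝ)*((n:ℝ)+1) ≤ 2*((n:ℝ)+1)*(((n:ℝ)+1)*r2) :=
      hkey.trans (mul_le_mul_of_nonneg_left hsumv (by positivity))
    have h5 : 2*(n:ℝ)*((n:ℝ)+1)*((n:ℝ)+1)*r2 = ((n:ℝ)+1)*(2*(n:ℝ)^2-1) := by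
      linear_combination ((n:ℝ)+1)*hmul
    have h6 := mul_le_mul_of_nonneg_left h3 (by positivity : (0:ℝ) ≤ (n:ℝ))
    nlinarith [h5, h6, hn1]
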